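/- arXiv:1206.0877 — 4 statements merged into one kernel-verified Lean document; each statement's English description precedes it below -/
import Mathlib

section
/- Let H be a formal power series with H(0) ≠ 0, let G(x) = x·H(x), and let A be the unique formal power series with A(0) = 0 satisfying A(x) = x·H(A(x)). Then for all n ≥ k ≥ 1, the coefficient of x^n in A(x)^k equals (k/n)·[x^{2n−k}]G(x)^n. -/
open PowerSeries Finset

/-- Substitution of `G` (with zero constant term) into `F`: the composition `F(G(x))`. -/
noncomputable def pcomp {R : Type*} [CommRing R] (F G : PowerSeries R) : PowerSeries R :=
  PowerSeries.mk fun n => ∑ m ∈ range (n + 1), coeff m F * coeff n (G ^ m)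

namespace LagAux

variable {K : Type*} [CommRing K]

lemma coeff_pcomp (F G : PowerSeries K) (n : ℕ) :
    coeff n (pcomp F G) = ∑ m ∈ range (n + 1), coeff m F * coeff n (G ^ m) := by
  simp [pcomp]

lemma coeff_pow_eq_zero {G : PowerSeries K} (hG : constantCoeff G = 0)
    {n m : ℕ} (h : n < m) : coeff n (G ^ m) = 0 := by
  obtain ⟨B, hB⟩ := pow_dvd_pow_of_dvd (PowerSeries.X_dvd_iff.2 hG) m
  rw [hB, PowerSeries.coeff_X_pow_mul', if_neg (by omega)]

lemma coeff_aeval {G : PowerSeries K} (hG : constantCoeff G = 0) (P : Polynomial K) (n : ℕ) :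
    coeff n (Polynomial.aeval G P) = ∑ m ∈ range (n + 1), P.coeff m * coeff n (G ^ m) := by
  rw [Polynomial.aeval_eq_sum_range' (n := max (n + 1) (P.natDegree + 1))
    (lt_of_lt_of_le (Nat.lt_succ_self _) (le_max_right _ _)) G]
  rw [map_sum,
    ← Finset.sum_subset (Finset.range_subset_range.2 (le_max_left (n + 1) (P.natDegree + 1)))
      (fun m _ hm => by
        rw [Finset.mem_range, not_lt] at hm
        rw [map_smul, coeff_pow_eq_zero hG (by omega), smul_zero])]
  exact Finset.sum_congr rfl fun m _ => by rw [map_smul, smul_eq_mul]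

lemma coeff_pcomp_trunc {G : PowerSeries K} (hG : constantCoeff G = 0) (F : PowerSeries K)
    {n N : ℕ} (h : n < N) :
    coeff n (pcomp F G) = coeff n (Polynomial.aeval G (trunc N F)) := by
  rw [coeff_aeval hG, coeff_pcomp]
  refine Finset.sum_congr rfl fun m hm => ?_
  rw [Finset.mem_range] at hm
  rw [coeff_trunc, if_pos (by omega)]

lemma pcomp_mul {G : PowerSeries K} (hG : constantCoeff G = 0) (F₁ F₂ : PowerSeries K) :
    pcomp (F₁ * F₂) G = pcomp F₁ G * pcomp F₂ G := by
  ext n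
  have h1 : coeff n (pcomp (F₁ * F₂) G)
      = coeff n (Polynomial.aeval G (trunc (n + 1) F₁ * trunc (n + 1) F₂)) := by
    rw [coeff_pcomp_trunc hG _ (Nat.lt_succ_self n), coeff_aeval hG, coeff_aeval hG]
    refine Finset.sum_congr rfl fun m hm => ?_
    rw [Finset.mem_range] at hm
    congr 1
    rw [coeff_trunc, if_pos (by omega), Polynomial.coeff_mul, PowerSeries.coeff_mul]
    refine Finset.sum_congr rfl fun p hp => ?_
    rw [Finset.HasAntidiagonal.mem_antidiagonal] at hp
    rw [coeff_trunc, coeff_trunc, if_pos (by omega), if_pos (by omega)]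
  rw [h1, map_mul, PowerSeries.coeff_mul, PowerSeries.coeff_mul]
  refine Finset.sum_congr rfl fun p hp => ?_
  rw [Finset.HasAntidiagonal.mem_antidiagonal] at hp
  rw [← coeff_pcomp_trunc hG F₁ (by omega : p.1 < n + 1),
    ← coeff_pcomp_trunc hG F₂ (by omega : p.2 < n + 1)]

lemma pcomp_one (G : PowerSeries K) : pcomp 1 G = 1 := by
  ext n
  rw [coeff_pcomp]
  rw [Finset.sum_eq_single 0]
  · simp
  · intro m _ hm
    rw [PowerSeries.coeff_one, if_neg hm, zero_mul]
  · simp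

lemma pcomp_pow {G : PowerSeries K} (hG : constantCoeff G = 0) (F : PowerSeries K) (m : ℕ) :
    pcomp (F ^ m) G = (pcomp F G) ^ m := by
  induction m with
  | zero => simpa using pcomp_one G
  | succ m ih => rw [pow_succ, pow_succ, pcomp_mul hG, ih]

lemma pcomp_X {G : PowerSeries K} (hG : constantCoeff G = 0) : pcomp X G = G := by
  ext n
  rw [coeff_pcomp, Finset.sum_eq_single 1]
  · cases n with
    | zero => simp [hG]
    | succ n => simp
  · intro m _ hm
    rw [PowerSeries.coeff_X, if_neg hm, zero_mul]
  · intro h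
    rw [Finset.mem_range, not_lt] at h
    obtain rfl : n = 0 := by omega
    simp [hG]

lemma pcomp_X_right (F : PowerSeries K) : pcomp F X = F := by
  ext n
  rw [coeff_pcomp, Finset.sum_eq_single n]
  · rw [← pow_one (X : PowerSeries K), ← pow_mul, PowerSeries.coeff_X_pow, if_pos (by ring), mul_one]
  · intro m hm hmn
    rw [← pow_one (X : PowerSeries K), ← pow_mul, PowerSeries.coeff_X_pow,
      if_neg (by omega), mul_zero]
  · intro h
    exact absurd (Finset.mem_range.2 (Nat.lt_succ_self n)) h

lemma pcomp_assoc (B C A : PowerSeries K) (hC : constantCoeff C = 0)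
    (hA : constantCoeff A = 0) :
    pcomp (pcomp B C) A = pcomp B (pcomp C A) := by
  ext n
  rw [coeff_pcomp, coeff_pcomp]
  have step1 : ∀ m ∈ range (n + 1),
      coeff m (pcomp B C) * coeff n (A ^ m)
      = ∑ j ∈ range (n + 1), coeff j B * coeff m (C ^ j) * coeff n (A ^ m) := by
    intro m hm
    rw [Finset.mem_range] at hm
    rw [coeff_pcomp, Finset.sum_mul]
    refine Finset.sum_subset (Finset.range_subset_range.2 (by omega)) fun j _ hj => ?_
    rw [Finset.mem_range, not_lt] at hj
    rw [coeff_pow_eq_zero hC (by omega), mul_zero, zero_mul]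
  rw [Finset.sum_congr rfl step1, Finset.sum_comm]
  refine Finset.sum_congr rfl fun j _ => ?_
  rw [← pcomp_pow hA, coeff_pcomp, Finset.mul_sum]
  exact Finset.sum_congr rfl fun m _ => by ring

lemma coeff_deriv_pow (Hs : PowerSeries K) (j i : ℕ) :
    (j : K) * coeff i (Hs ^ (j - 1) * d⁄dX K Hs) = ((i : K) + 1) * coeff (i + 1) (Hs ^ j) := by
  have h2 := congrArg (coeff i) (Derivation.leibniz_pow (D := d⁄dX K) (a := Hs) j)
  rw [map_nsmul, PowerSeries.coeff_derivative, smul_eq_mul, nsmul_eq_mul] at h2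
  linear_combination -h2

lemma coeff_self_pow {A P : PowerSeries K} (hAe : A = X * P) (m : ℕ) :
    coeff m (A ^ m) = (constantCoeff P) ^ m := by
  rw [hAe, mul_pow, PowerSeries.coeff_X_pow_mul', if_pos le_rfl, Nat.sub_self, ← map_pow]
  exact PowerSeries.coeff_zero_eq_constantCoeff_apply _

end LagAux

namespace LagAux2

variable {K : Type*} [Field K]

lemma pcomp_injective {A P : PowerSeries K} (hAe : A = X * P)
    (hP0 : constantCoeff P ≠ 0) {B C : PowerSeries K}
    (h : pcomp B A = pcomp C A) : B = C := by
  ext m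
  induction m using Nat.strong_induction_on with
  | _ m ih =>
    have hm := congrArg (coeff m) h
    rw [LagAux.coeff_pcomp, LagAux.coeff_pcomp, Finset.sum_range_succ,
      Finset.sum_range_succ] at hm
    have heq : ∑ j ∈ range m, coeff j B * coeff m (A ^ j)
        = ∑ j ∈ range m, coeff j C * coeff m (A ^ j) :=
      Finset.sum_congr rfl fun j hj => by rw [ih j (Finset.mem_range.1 hj)]
    rw [heq, add_right_inj] at hm
    have hne : coeff m (A ^ m) ≠ 0 := by
      rw [LagAux.coeff_self_pow hAe]; exact pow_ne_zero _ hP0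
    exact mul_right_cancel₀ hne hm

end LagAux2

theorem stmt_6 {K : Type*} [Field K] [CharZero K] (H A : PowerSeries K)
    (hH : constantCoeff H ≠ 0) (hA0 : constantCoeff A = 0)
    (hA : A = X * pcomp H A) (n k : ℕ) (hk : 1 ≤ k) (hkn : k ≤ n) :
    coeff n (A ^ k) = (k : K) / (n : K) * coeff (2 * n - k) ((X * H) ^ n) := by
  classical
  have hn : 1 ≤ n := le_trans hk hkn
  set dH := d⁄dX K H with hdH
  have hP0 : constantCoeff (pcomp H A) = constantCoeff H := by
    have h0 := LagAux.coeff_pcomp H A 0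
    simpa using h0
  have hPne : constantCoeff (pcomp H A) ≠ 0 := by rw [hP0]; exact hH
  have hHinv : H * H⁻¹ = 1 := PowerSeries.mul_inv_cancel H hH
  set f : PowerSeries K := X * H⁻¹ with hfdef
  have hf0 : constantCoeff f = 0 := by simp [hfdef]
  have hfA : pcomp f A = X := by
    rw [hfdef, LagAux.pcomp_mul hA0, LagAux.pcomp_X hA0]
    calc A * pcomp H⁻¹ A = X * (pcomp H A * pcomp H⁻¹ A) := by
          nth_rewrite 1 [hA]; ring
    _ = X * pcomp (H * H⁻¹) A := by rw [LagAux.pcomp_mul hA0]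
    _ = X := by rw [hHinv, LagAux.pcomp_one, mul_one]
  have hAf : pcomp A f = X := by
    refine LagAux2.pcomp_injective hA hPne ?_
    rw [LagAux.pcomp_assoc _ _ _ hf0 hA0, hfA, LagAux.pcomp_X_right, LagAux.pcomp_X hA0]
  have hXk : (X : PowerSeries K) ^ k = pcomp (A ^ k) f := by
    rw [LagAux.pcomp_pow hf0, hAf]
  set D : PowerSeries K := H ^ (n - 1) * (H - X * dH) with hDdef
  have hSn : ∀ r : ℕ, 1 ≤ r → coeff (r - 1) (H ^ (r - 1) * dH) = coeff r (H ^ r) := by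
    intro r hr
    have h := LagAux.coeff_deriv_pow H r (r - 1)
    have hr1 : (r - 1) + 1 = r := by omega
    rw [hr1] at h
    have hc : ((r - 1 : ℕ) : K) + 1 = (r : K) := by
      rw [Nat.cast_sub hr]; push_cast; ring
    rw [hc] at h
    exact mul_left_cancel₀ (Nat.cast_ne_zero.2 (by omega) : (r : K) ≠ 0) h
  have hkey : ∀ m : ℕ, 1 ≤ m → m ≤ n → coeff n (f ^ m * D) = if m = n then 1 else 0 := by
    intro m hm1 hmn
    have hfm : f ^ m * D = X ^ m * ((H⁻¹) ^ m * D) := by rw [hfdef, mul_pow]; ring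
    rw [hfm, PowerSeries.coeff_X_pow_mul', if_pos hmn]
    by_cases hmn' : m = n
    · subst hmn'
      rw [if_pos rfl, Nat.sub_self, PowerSeries.coeff_zero_eq_constantCoeff, hDdef]
      rw [map_mul, map_mul, map_pow, map_pow, map_sub, map_mul,
        PowerSeries.constantCoeff_X, zero_mul, sub_zero, PowerSeries.constantCoeff_inv]
      rw [inv_pow, ← pow_succ, Nat.sub_add_cancel hm1]
      exact inv_mul_cancel₀ (pow_ne_zero _ hH)
    · rw [if_neg hmn']
      have hr1 : 1 ≤ n - m := by omega
      have hcan : (H⁻¹) ^ m * H ^ m = 1 := by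
        rw [← mul_pow, mul_comm, hHinv, one_pow]
      have hD2 : (H⁻¹) ^ m * D = H ^ (n - m) - X * (H ^ (n - m - 1) * dH) := by
        have hsplit : H ^ (n - 1) = H ^ m * H ^ (n - m - 1) := by
          rw [← pow_add]; congr 1; omega
        have hstep : H ^ (n - m - 1) * H = H ^ (n - m) := by
          rw [← pow_succ]; congr 1; omega
        calc (H⁻¹) ^ m * D = ((H⁻¹) ^ m * H ^ m) * (H ^ (n - m - 1) * (H - X * dH)) := by
              rw [hDdef, hsplit]; ring
        _ = H ^ (n - m - 1) * (H - X * dH) := by rw [hcan, one_mul]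
        _ = H ^ (n - m) - X * (H ^ (n - m - 1) * dH) := by rw [mul_sub, hstep]; ring
      rw [hD2, map_sub]
      have hX1 : coeff (n - m) (X * (H ^ (n - m - 1) * dH))
          = coeff (n - m - 1) (H ^ (n - m - 1) * dH) := by
        rw [← pow_one (X : PowerSeries K), PowerSeries.coeff_X_pow_mul', if_pos (by omega)]
      rw [hX1, hSn (n - m) hr1, sub_self]
  have hmain : coeff n ((X : PowerSeries K) ^ k * D) = coeff n (A ^ k) := by
    rw [hXk, PowerSeries.coeff_mul]
    have hexp : ∀ p ∈ Finset.HasAntidiagonal.antidiagonal n,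
        coeff p.1 (pcomp (A ^ k) f) * coeff p.2 D
        = ∑ m ∈ range (n + 1), coeff m (A ^ k) * coeff p.1 (f ^ m) * coeff p.2 D := by
      intro p hp
      rw [Finset.HasAntidiagonal.mem_antidiagonal] at hp
      rw [LagAux.coeff_pcomp, Finset.sum_mul]
      refine Finset.sum_subset (Finset.range_subset_range.2 (by omega)) fun m _ hm => ?_
      rw [Finset.mem_range, not_lt] at hm
      rw [LagAux.coeff_pow_eq_zero hf0 (by omega), mul_zero, zero_mul]
    rw [Finset.sum_congr rfl hexp, Finset.sum_comm]
    have hcol : ∀ m ∈ range (n + 1),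
        (∑ p ∈ Finset.HasAntidiagonal.antidiagonal n, coeff m (A ^ k) * coeff p.1 (f ^ m) * coeff p.2 D)
        = coeff m (A ^ k) * coeff n (f ^ m * D) := by
      intro m _
      rw [PowerSeries.coeff_mul, Finset.mul_sum]
      exact Finset.sum_congr rfl fun p _ => by ring
    rw [Finset.sum_congr rfl hcol,
      Finset.sum_eq_single_of_mem n (Finset.mem_range.2 (Nat.lt_succ_self n))]
    · rw [hkey n hn le_rfl, if_pos rfl, mul_one]
    · intro m hm hmn
      rcases Nat.eq_zero_or_pos m with rfl | hm1
      · rw [LagAux.coeff_pow_eq_zero hA0 (by omega), zero_mul]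
      · rw [hkey m hm1 (by rw [Finset.mem_range] at hm; omega), if_neg hmn, mul_zero]
  have hleft : coeff n ((X : PowerSeries K) ^ k * D)
      = (k : K) / (n : K) * coeff (n - k) (H ^ n) := by
    rw [PowerSeries.coeff_X_pow_mul', if_pos hkn, hDdef]
    have hsplit : H ^ (n - 1) * (H - X * dH) = H ^ n - X * (H ^ (n - 1) * dH) := by
      rw [mul_sub]
      congr 1
      · rw [← pow_succ]; congr 1; omega
      · ring
    rw [hsplit, map_sub]
    have hnne : (n : K) ≠ 0 := Nat.cast_ne_zero.2 (by omega)
    by_cases hke : k = n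
    · subst hke
      rw [Nat.sub_self]
      have h0 : coeff 0 (X * (H ^ (k - 1) * dH)) = 0 := by
        rw [PowerSeries.coeff_zero_eq_constantCoeff, map_mul, PowerSeries.constantCoeff_X,
          zero_mul]
      rw [h0, sub_zero, div_self hnne, one_mul]
    · have hlt : k < n := lt_of_le_of_ne hkn hke
      have hX1 : coeff (n - k) (X * (H ^ (n - 1) * dH))
          = coeff (n - k - 1) (H ^ (n - 1) * dH) := by
        rw [← pow_one (X : PowerSeries K), PowerSeries.coeff_X_pow_mul', if_pos (by omega)]
      rw [hX1]
      have h := LagAux.coeff_deriv_pow H n (n - k - 1)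
      have hi1 : (n - k - 1) + 1 = n - k := by omega
      rw [hi1] at h
      have hc : ((n - k - 1 : ℕ) : K) + 1 = (n : K) - (k : K) := by
        rw [Nat.cast_sub (by omega : 1 ≤ n - k), Nat.cast_sub hkn]; push_cast; ring
      rw [hc] at h
      have hsolve : coeff (n - k - 1) (H ^ (n - 1) * dH)
          = ((n : K) - (k : K)) / (n : K) * coeff (n - k) (H ^ n) := by
        field_simp
        linear_combination h
      rw [hsolve]
      field_simp
      ring
  have hrhs : coeff (2 * n - k) ((X * H) ^ n) = coeff (n - k) (H ^ n) := by
    have h2 : 2 * n - k - n = n - k := by omega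
    rw [mul_pow, PowerSeries.coeff_X_pow_mul', if_pos (by omega : n ≤ 2 * n - k), h2]
  rw [← hmain, hleft, hrhs]
end

section
/- Let H be a formal power series with H(0) ≠ 0, G(x) = x·H(x) with composita G^Δ(n,k) = [x^n]G(x)^k, and let A satisfy A(0) = 0 and A(x) = x·H(A(x)). Then the derivative A'(x) equals ∑_{n≥1} G^Δ(2n−1, n)·x^{n−1}; that is, the generating function for the central coefficients G^Δ(2n−1,n) of the triangle is A'(x). -/
open PowerSeries Finset

namespace LagrangeAux

variable {K : Type*} [Field K]

/-- Congruence mod `X^n`. -/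
def E (n : ℕ) (F G : PowerSeries K) : Prop := ∀ m, m < n → coeff m F = coeff m G

lemma E_refl {n : ℕ} (F : PowerSeries K) : E n F F := fun _ _ => rfl

lemma E_mul {n : ℕ} {F F' G G' : PowerSeries K} (h1 : E n F F') (h2 : E n G G') :
    E n (F * G) (F' * G') := by
  intro m hm
  rw [coeff_mul, coeff_mul]
  refine Finset.sum_congr rfl fun p hp => ?_
  rw [Finset.HasAntidiagonal.mem_antidiagonal] at hp
  rw [h1 p.1 (by omega), h2 p.2 (by omega)]

lemma E_pow {n : ℕ} {F F' : PowerSeries K} (h : E n F F') (k : ℕ) :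
    E n (F ^ k) (F' ^ k) := by
  induction k with
  | zero => simpa using E_refl (1 : PowerSeries K)
  | succ k ih => rw [pow_succ, pow_succ]; exact E_mul ih h

lemma key1 [CharZero K] {u : PowerSeries K} (hu : constantCoeff u ≠ 0) (k : ℕ) :
    coeff k ((u⁻¹) ^ (k + 1) * derivativeFun (X * u)) = if k = 0 then 1 else 0 := by
  have hdX : derivativeFun (X : K⟦X⟧) = 1 := derivative_X
  have hXu : derivativeFun ((X : K⟦X⟧) * u) = X * derivativeFun u + u := by
    rw [derivativeFun_mul, hdX, smul_eq_mul, smul_eq_mul, mul_one]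
  have hui : u⁻¹ * u = 1 := PowerSeries.inv_mul_cancel u hu
  have huim : u * u⁻¹ = 1 := PowerSeries.mul_inv_cancel u hu
  cases k with
  | zero =>
    have expand : (u⁻¹ : K⟦X⟧) ^ (0+1) * (X * derivativeFun u + u)
        = X * (u⁻¹ * derivativeFun u) + u⁻¹ * u := by ring
    rw [hXu, expand, hui, map_add]
    rw [show (X : K⟦X⟧) = X ^ 1 by rw [pow_one]]
    rw [coeff_X_pow_mul', if_neg (by omega)]
    simp
  | succ j =>
    have expand : (u⁻¹ : K⟦X⟧) ^ (j+1+1) * (X * derivativeFun u + u)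
        = X ^ 1 * ((u⁻¹) ^ (j+2) * derivativeFun u) + (u⁻¹) ^ (j+1) * (u⁻¹ * u) := by ring
    rw [hXu, expand, hui, mul_one, map_add, coeff_X_pow_mul', if_pos (by omega), if_neg (by omega)]
    have hder : derivativeFun ((u⁻¹ : K⟦X⟧) ^ (j+1))
        = -((j+1 : ℕ) • ((u⁻¹) ^ (j+2) * derivativeFun u)) := by
      have h1 := Derivation.leibniz_pow (D := derivative K) (a := (u⁻¹ : K⟦X⟧)) (j+1)
      rw [derivative_inv'] at h1
      have h2 : ((u⁻¹ : K⟦X⟧) ^ (j+1-1)) • (-(u⁻¹) ^ 2 * d⁄dX K u)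
          = -((u⁻¹) ^ (j+2) * derivativeFun u) := by
        have : j + 1 - 1 = j := rfl
        rw [this, smul_eq_mul]
        show (u⁻¹ : K⟦X⟧) ^ j * (-(u⁻¹) ^ 2 * derivativeFun u) = _
        ring
      rw [h2, smul_neg] at h1
      exact h1
    have hcoeff := congrArg (coeff j) hder
    change coeff j (d⁄dX K ((u⁻¹ : K⟦X⟧) ^ (j+1))) = _ at hcoeff
    rw [coeff_derivative, map_neg, map_nsmul, nsmul_eq_mul, Nat.cast_add,
      Nat.cast_one] at hcoeff
    have hne : ((j : K) + 1) ≠ 0 := by exact_mod_cast Nat.cast_add_one_ne_zero (R := K) j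
    have hmain : coeff j ((u⁻¹ : K⟦X⟧) ^ (j+2) * derivativeFun u)
        = -(coeff (j+1) ((u⁻¹) ^ (j+1))) := by
      apply mul_left_cancel₀ hne
      linear_combination hcoeff
    rw [Nat.add_sub_cancel, hmain]
    ring

end LagrangeAux

open LagrangeAux in
theorem stmt_7 {K : Type*} [Field K] [CharZero K] (H A : PowerSeries K)
    (hH : constantCoeff H ≠ 0) (hA0 : constantCoeff A = 0)
    (hA : A = X * pcomp H A) :
    derivativeFun A =
      PowerSeries.mk fun m => coeff (2 * (m + 1) - 1) ((X * H) ^ (m + 1)) := by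
  ext m
  rw [coeff_mk]
  set u := pcomp H A with hu_def
  have hA' : A = X * u := hA
  have hu0 : constantCoeff u = constantCoeff H := by
    rw [hu_def]
    simp only [pcomp, constantCoeff_mk]
    rw [Finset.sum_range_one]
    simp [← coeff_zero_eq_constantCoeff]
  have hune : constantCoeff u ≠ 0 := by rw [hu0]; exact hH
  have hui : u⁻¹ * u = 1 := PowerSeries.inv_mul_cancel u hune
  have huim : u * u⁻¹ = 1 := PowerSeries.mul_inv_cancel u hune
  have hAz : ∀ j l : ℕ, l < j → coeff l (A ^ j) = 0 := by
    intro j l hl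
    rw [hA', mul_pow, coeff_X_pow_mul', if_neg (by omega)]
  -- simplify the RHS
  have hRHS : coeff (2 * (m + 1) - 1) ((X * H) ^ (m + 1)) = coeff m (H ^ (m + 1)) := by
    have h2 : 2 * (m + 1) - 1 = m + (m + 1) := by omega
    rw [h2, mul_pow, coeff_X_pow_mul]
  rw [hRHS]
  set P : Polynomial K := trunc (m + 1) H ^ (m + 1) with hP
  set W : K⟦X⟧ := (u⁻¹) ^ (m + 1) * derivativeFun A with hW
  have hE_trunc : E (m + 1) ((trunc (m + 1) H : Polynomial K) : K⟦X⟧) H := by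
    intro l hl
    rw [Polynomial.coeff_coe, coeff_trunc, if_pos hl]
  have hPcoeff : ∀ l, l < m + 1 → P.coeff l = coeff l (H ^ (m + 1)) := by
    intro l hl
    have h1 := E_pow hE_trunc (m + 1) l hl
    rw [hP, ← Polynomial.coeff_coe, Polynomial.coe_pow]
    exact h1
  have hdeg : (trunc (m + 1) H).natDegree < m + 1 := natDegree_trunc_lt H m
  have haev : (Polynomial.aeval A (trunc (m + 1) H) : K⟦X⟧)
      = ∑ j ∈ range (m + 1), ((trunc (m + 1) H).coeff j) • A ^ j :=
    Polynomial.aeval_eq_sum_range' hdeg A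
  have hEu : E (m + 1) u (Polynomial.aeval A (trunc (m + 1) H)) := by
    intro l hl
    calc coeff l u = ∑ j ∈ range (l + 1), coeff j H * coeff l (A ^ j) := by
          rw [hu_def]; simp [pcomp, coeff_mk]
    _ = ∑ j ∈ range (m + 1), coeff j H * coeff l (A ^ j) := by
          refine Finset.sum_subset (Finset.range_subset_range.mpr (by omega)) ?_
          intro j hj hj2
          rw [Finset.mem_range] at hj2
          rw [hAz j l (by omega), mul_zero]
    _ = coeff l (Polynomial.aeval A (trunc (m + 1) H)) := by
          rw [haev, map_sum]
          refine Finset.sum_congr rfl fun j hj => ?_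
          rw [Finset.mem_range] at hj
          rw [map_smul, smul_eq_mul, coeff_trunc, if_pos hj]
  have hEun : E (m + 1) (u ^ (m + 1)) (Polynomial.aeval A P) := by
    rw [hP, map_pow]
    exact E_pow hEu (m + 1)
  have hWstep : coeff m (derivativeFun A)
      = coeff m ((Polynomial.aeval A P : K⟦X⟧) * W) := by
    have h1 : derivativeFun A = u ^ (m + 1) * W := by
      rw [hW, ← mul_assoc, ← mul_pow, huim, one_pow, one_mul]
    rw [h1]
    exact E_mul hEun (E_refl W) m (by omega)
  rw [hWstep, Polynomial.aeval_eq_sum_range (p := P) A, Finset.sum_mul, map_sum]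
  have hterm : ∀ j, coeff m ((P.coeff j • A ^ j) * W)
      = P.coeff j * (if j = m then 1 else 0) := by
    intro j
    rw [smul_mul_assoc, map_smul, smul_eq_mul]
    congr 1
    have hApow : A ^ j = X ^ j * u ^ j := by rw [hA', mul_pow]
    have hsplitA : A ^ j * W = X ^ j * (u ^ j * W) := by
      rw [hApow]; ring
    by_cases hjm : j ≤ m
    · rw [hsplitA, coeff_X_pow_mul', if_pos hjm, hW]
      have hsplit : (u⁻¹ : K⟦X⟧) ^ (m + 1) = (u⁻¹) ^ ((m - j) + 1) * (u⁻¹) ^ j := by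
        rw [← pow_add]; congr 1; omega
      have hcollapse : u ^ j * ((u⁻¹) ^ (m + 1) * derivativeFun A)
          = (u⁻¹) ^ ((m - j) + 1) * derivativeFun A := by
        rw [hsplit]
        calc u ^ j * ((u⁻¹) ^ ((m - j) + 1) * (u⁻¹) ^ j * derivativeFun A)
            = (u * u⁻¹) ^ j * ((u⁻¹) ^ ((m - j) + 1) * derivativeFun A) := by
              rw [mul_pow]; ring
        _ = (u⁻¹) ^ ((m - j) + 1) * derivativeFun A := by
              rw [huim, one_pow, one_mul]
      rw [hcollapse, hA', key1 hune (m - j)]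
      by_cases h : j = m
      · rw [if_pos (by omega), if_pos h]
      · rw [if_neg (by omega), if_neg h]
    · rw [if_neg (by omega), hsplitA, coeff_X_pow_mul', if_neg hjm]
  calc ∑ j ∈ range (P.natDegree + 1), coeff m ((P.coeff j • A ^ j) * W)
      = ∑ j ∈ range (P.natDegree + 1), P.coeff j * (if j = m then 1 else 0) :=
        Finset.sum_congr rfl fun j _ => hterm j
  _ = ∑ j ∈ range (P.natDegree + 1), (if j = m then P.coeff j else 0) := by
        refine Finset.sum_congr rfl fun j _ => ?_
        rw [mul_ite, mul_one, mul_zero]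
  _ = if m ∈ range (P.natDegree + 1) then P.coeff m else 0 := Finset.sum_ite_eq' _ m _
  _ = P.coeff m := by
        split_ifs with h
        · rfl
        · rw [Finset.mem_range] at h
          exact (Polynomial.coeff_eq_zero_of_natDegree_lt (by omega)).symm
  _ = coeff m (H ^ (m + 1)) := hPcoeff m (by omega)
end

section
/- The formal power series A(x) = (1 + x − √(1 − 6x + x²))/4 satisfies the functional equation A(x) = x·(1 − A(x))/(1 − 2A(x)), i.e., A(x)·(1 − 2A(x)) = x·(1 − A(x)), with A(0) = 0. -/
open PowerSeries

theorem stmt_11 (S A : PowerSeries ℚ) (hS0 : constantCoeff S = 1)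
    (hS : S ^ 2 = 1 - 6 * X + X ^ 2) (hA : 4 * A = 1 + X - S) :
    A * (1 - 2 * A) = X * (1 - A) ∧ constantCoeff A = 0 := by
  constructor
  · have h8 : (8 : PowerSeries ℚ) * (A * (1 - 2 * A)) = 8 * (X * (1 - A)) := by
      linear_combination (S + 1 + X - 4 * A) * hA - hS
    have h80 : (8 : PowerSeries ℚ) ≠ 0 := by
      intro h
      have := congrArg constantCoeff h
      rw [map_ofNat] at this
      norm_num at this
    exact mul_left_cancel₀ h80 h8
  · have := congrArg constantCoeff hA
    simp only [map_mul, map_add, map_sub, map_one, map_ofNat, constantCoeff_X, hS0] at this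
    linarith
end

section
/- The composita of C(x) = (1 − √(1−4x))/2 is given by [x^n]C(x)^k = (k/n)·C(2n−k−1, n−1) for all n ≥ k ≥ 1. -/
open PowerSeries

private lemma aux_zero (Cat : PowerSeries ℚ) (h0 : constantCoeff Cat = 0)
    (m k : ℕ) (h : m < k) : coeff m (Cat ^ k) = 0 := by
  have hdvd : (X : PowerSeries ℚ) ^ k ∣ Cat ^ k :=
    pow_dvd_pow_of_dvd (X_dvd_iff.mpr h0) k
  exact (X_pow_dvd_iff.mp hdvd) m h

private lemma aux_rec (Cat : PowerSeries ℚ) (hCat : Cat = X + Cat ^ 2) (m j : ℕ) :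
    coeff (m + 1) (Cat ^ (j + 1)) =
      coeff m (Cat ^ j) + coeff (m + 1) (Cat ^ (j + 2)) := by
  have h : Cat ^ (j + 1) = X * Cat ^ j + Cat ^ (j + 2) := by
    calc Cat ^ (j + 1) = (X + Cat ^ 2) * Cat ^ j := by rw [← hCat, pow_succ']
    _ = X * Cat ^ j + Cat ^ (j + 2) := by ring
  rw [h, map_add, coeff_succ_X_mul]

private lemma aux_diag (Cat : PowerSeries ℚ) (hCat : Cat = X + Cat ^ 2)
    (h0 : constantCoeff Cat = 0) : ∀ j : ℕ, coeff (j + 1) (Cat ^ (j + 1)) = 1 := by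
  intro j
  induction j with
  | zero =>
    have h2 : coeff 1 (Cat ^ 2) = 0 := aux_zero Cat h0 1 2 (by omega)
    rw [pow_one, hCat, map_add, coeff_one_X, h2, add_zero]
  | succ j ih =>
    rw [aux_rec Cat hCat (j + 1) (j + 1), ih,
      aux_zero Cat h0 (j + 2) (j + 3) (by omega), add_zero]

private lemma aux_key (Cat : PowerSeries ℚ) (hCat : Cat = X + Cat ^ 2)
    (h0 : constantCoeff Cat = 0) :
    ∀ n : ℕ, ∀ d j : ℕ, (j + 1) + d = n →
    coeff n (Cat ^ (j + 1)) =
      ((j + 2 * d).choose (j + d) : ℚ) - ((j + 2 * d).choose (j + d + 1) : ℚ) := by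
  intro n
  induction n using Nat.strong_induction_on with
  | _ n IH =>
    intro d
    induction d with
    | zero =>
      intro j hj
      subst hj
      simp [aux_diag Cat hCat h0 j, Nat.choose_self, Nat.choose_succ_self]
    | succ d ihd =>
      intro j hj
      have hn : n = j + d + 2 := by omega
      subst hn
      rw [show j + d + 2 = (j + d + 1) + 1 by ring, aux_rec Cat hCat (j + d + 1) j]
      have h2 : coeff (j + d + 1 + 1) (Cat ^ (j + 2)) =
          (((j + 1) + 2 * d).choose ((j + 1) + d) : ℚ) -
            (((j + 1) + 2 * d).choose ((j + 1) + d + 1) : ℚ) :=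
        ihd (j + 1) (by omega)
      rw [h2]
      match j with
      | 0 =>
        have h1 : coeff (0 + d + 1) ((Cat : PowerSeries ℚ) ^ 0) = 0 := by
          simp [coeff_one]
        rw [h1]
        have p1 : (2 * d + 2).choose (d + 1) = (2 * d + 1).choose d + (2 * d + 1).choose (d + 1) :=
          Nat.choose_succ_succ _ _
        have p2 : (2 * d + 2).choose (d + 2) = (2 * d + 1).choose (d + 1) + (2 * d + 1).choose (d + 2) :=
          Nat.choose_succ_succ _ _
        have psym : (2 * d + 1).choose d = (2 * d + 1).choose (d + 1) := by
          rw [← Nat.choose_symm (show d + 1 ≤ 2 * d + 1 by omega)]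
          congr 1
          omega
        rw [show (0:ℕ) + 2 * (d + 1) = 2 * d + 2 from by omega,
          show (0:ℕ) + (d + 1) = d + 1 from by omega,
          show (0:ℕ) + 1 + 2 * d = 2 * d + 1 from by omega,
          show (0:ℕ) + 1 + d = d + 1 from by omega,
          show d + 1 + 1 = d + 2 from by omega, p1, p2, psym]
        push_cast
        ring
      | i + 1 =>
        have h1 : coeff (i + 1 + d + 1) (Cat ^ (i + 1)) =
            ((i + 2 * (d + 1)).choose (i + (d + 1)) : ℚ) -
              ((i + 2 * (d + 1)).choose (i + (d + 1) + 1) : ℚ) :=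
          IH (i + 1 + d + 1) (by omega) (d + 1) i (by omega)
        rw [h1]
        set M := i + 2 * (d + 1) with hM
        set p := i + (d + 1) with hp
        rw [show i + 1 + 1 + 2 * d = M from by omega,
          show i + 1 + 1 + d = p + 1 from by omega,
          show i + 1 + 2 * (d + 1) = M + 1 from by omega,
          show i + 1 + (d + 1) = p + 1 from by omega,
          Nat.choose_succ_succ M p,
          Nat.choose_succ_succ M (p + 1)]
        push_cast
        ring

theorem stmt_17 (S Cat : PowerSeries ℚ) (hS0 : constantCoeff S = 1)
    (hS : S ^ 2 = 1 - 4 * X) (hC : 2 * Cat = 1 - S)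
    (n k : ℕ) (hk : 1 ≤ k) (hkn : k ≤ n) :
    coeff n (Cat ^ k) = (k : ℚ) / (n : ℚ) * ((2 * n - k - 1).choose (n - 1) : ℚ) := by
  have h4 : (4 : PowerSeries ℚ) * Cat = 4 * (X + Cat ^ 2) := by
    linear_combination (-1 : PowerSeries ℚ) * hS + (S + 1 - 2 * Cat) * hC
  have h4ne : (4 : PowerSeries ℚ) ≠ 0 := by
    intro h
    have := congrArg (constantCoeff) h
    rw [map_ofNat, map_zero] at this
    norm_num at this
  have hCat : Cat = X + Cat ^ 2 := mul_left_cancel₀ h4ne h4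
  have h0 : constantCoeff Cat = 0 := by
    have hc := congrArg (constantCoeff) hC
    rw [map_mul, map_sub, map_one, hS0, map_ofNat] at hc
    linarith [hc]
  obtain ⟨i, rfl⟩ : ∃ i, k = i + 1 := ⟨k - 1, by omega⟩
  obtain ⟨e, rfl⟩ : ∃ e, n = i + 1 + e := ⟨n - (i + 1), by omega⟩
  have hkey := aux_key Cat hCat h0 (i + 1 + e) e i (by omega)
  have hm : 2 * (i + 1 + e) - (i + 1) - 1 = i + 2 * e := by omega
  have hn1 : i + 1 + e - 1 = i + e := by omega
  rw [hm, hn1, hkey]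
  have hcs : (i + 2 * e).choose (i + e + 1) * (i + e + 1) =
      (i + 2 * e).choose (i + e) * ((i + 2 * e) - (i + e)) :=
    Nat.choose_succ_right_eq _ _
  rw [show i + 2 * e - (i + e) = e by omega] at hcs
  have hcsq : ((i + 2 * e).choose (i + e + 1) : ℚ) * (i + e + 1) =
      ((i + 2 * e).choose (i + e) : ℚ) * e := by exact_mod_cast hcs
  have hne : ((i : ℚ) + 1 + e) ≠ 0 := by positivity
  field_simp
  push_cast at hcsq ⊢
  linarith [hcsq]
end
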